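/- Let p be a prime with p ≡ 1 (mod 3). Then -3 is a square modulo p, and consequently (-3)^{(p-1)/6} mod p is a cube root of unity in 𝔽_p^×; moreover this cube root of unity equals 1 if and only if 3 is a cube modulo p. -/
import Mathlib

/-- Cube criterion in the unit group of `ZMod p`. -/
lemma cube_crit (p : ℕ) [Fact p.Prime] (h3 : 3 ∣ p - 1) (a : (ZMod p)ˣ) :
    a ^ ((p - 1) / 3) = 1 ↔ ∃ b : (ZMod p)ˣ, b ^ 3 = a := by
  have hp := (Fact.out : p.Prime)
  have hm : p - 1 = 3 * ((p - 1) / 3) := (Nat.mul_div_cancel' h3).symm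
  have hm0 : 0 < (p - 1) / 3 := by have := hp.two_le; omega
  constructor
  · intro h
    obtain ⟨g, hg⟩ := IsCyclic.exists_monoid_generator (α := (ZMod p)ˣ)
    have hord : orderOf g = p - 1 := by
      have := orderOf_eq_card_of_forall_mem_zpowers
        (fun x => Subgroup.mem_zpowers_iff.mpr (by
          obtain ⟨k, hk⟩ := (Submonoid.mem_powers_iff x g).mp (hg x)
          exact ⟨(k : ℤ), by rw [zpow_natCast, hk]⟩))
      rw [this, Nat.card_eq_fintype_card, ZMod.card_units_eq_totient, Nat.totient_prime hp]
    obtain ⟨k, hk⟩ := (Submonoid.mem_powers_iff a g).mp (hg a)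
    have hpow : g ^ (k * ((p - 1) / 3)) = 1 := by rw [pow_mul, hk, h]
    have hdvd := orderOf_dvd_of_pow_eq_one hpow
    rw [hord] at hdvd
    have h3k : 3 ∣ k := by
      obtain ⟨c, hc⟩ := hdvd
      have hc' : k * ((p - 1) / 3) = 3 * ((p - 1) / 3) * c := by rw [← hm]; exact hc
      exact ⟨c, Nat.eq_of_mul_eq_mul_right hm0
        (show k * ((p - 1) / 3) = 3 * c * ((p - 1) / 3) by rw [hc']; ring)⟩
    obtain ⟨j, rfl⟩ := h3k
    refine ⟨g ^ j, ?_⟩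
    rw [← pow_mul']
    exact hk
  · rintro ⟨b, rfl⟩
    rw [← pow_mul, ← hm]
    exact ZMod.units_pow_card_sub_one_eq_one p b

/-- Cube criterion in `ZMod p`. -/
lemma cube_crit' (p : ℕ) [Fact p.Prime] (h3 : 3 ∣ p - 1) (a : ZMod p) (ha : a ≠ 0) :
    a ^ ((p - 1) / 3) = 1 ↔ ∃ x : ZMod p, x ^ 3 = a := by
  constructor
  · intro h
    have hu : (Units.mk0 a ha) ^ ((p - 1) / 3) = 1 := by
      ext
      push_cast
      exact h
    obtain ⟨b, hb⟩ := (cube_crit p h3 _).mp hu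
    exact ⟨(b : ZMod p), by rw [← Units.val_pow_eq_pow_val, hb, Units.val_mk0]⟩
  · rintro ⟨x, rfl⟩
    have hx : x ≠ 0 := by rintro rfl; simp at ha
    rw [← pow_mul, Nat.mul_div_cancel' h3]
    exact ZMod.pow_card_sub_one_eq_one hx

/-- For a prime `p ≡ 1 (mod 3)`: `-3` is a square mod `p`, `(-3)^((p-1)/6)` is a cube
root of unity in `𝔽_p^×`, and it equals `1` if and only if `3` is a cube mod `p`. -/
theorem stmt9 (p : ℕ) (hp : p.Prime) (hp3 : p % 3 = 1) :
    (∃ y : ZMod p, y ^ 2 = -3) ∧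
    ((-3 : ZMod p) ^ ((p - 1) / 6)) ^ 3 = 1 ∧
    ((-3 : ZMod p) ^ ((p - 1) / 6) = 1 ↔ ∃ x : ZMod p, x ^ 3 = 3) := by
  haveI : Fact p.Prime := ⟨hp⟩
  have hp2 : p ≠ 2 := by rintro rfl; simp at hp3
  have hodd : p % 2 = 1 := by
    rcases Nat.even_or_odd p with h | h
    · exact absurd ((Nat.Prime.even_iff hp).mp h) hp2
    · exact Nat.odd_iff.mp h
  have hple := hp.two_le
  have h2 : 2 ∣ p - 1 := ⟨p / 2, by omega⟩
  have h3 : 3 ∣ p - 1 := ⟨p / 3, by omega⟩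
  have h6 : 6 ∣ p - 1 := Nat.Coprime.mul_dvd_of_dvd_of_dvd (by norm_num) h2 h3
  have hp3' : p ≠ 3 := by omega
  have h30 : (3 : ZMod p) ≠ 0 := by
    intro h
    have := (ZMod.natCast_eq_zero_iff 3 p).mp (by exact_mod_cast h)
    have := (Nat.prime_dvd_prime_iff_eq hp Nat.prime_three).mp this
    exact hp3' this
  have hn30 : (-3 : ZMod p) ≠ 0 := by simpa using h30
  -- get a primitive cube root of unity
  obtain ⟨u, hu⟩ := exists_prime_orderOf_dvd_card (G := (ZMod p)ˣ) 3
    (by rwa [ZMod.card_units_eq_totient, Nat.totient_prime hp])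
  set ω : ZMod p := (u : ZMod p) with hωdef
  have hω3 : ω ^ 3 = 1 := by
    have : u ^ 3 = 1 := by rw [← hu]; exact pow_orderOf_eq_one u
    rw [hωdef, ← Units.val_pow_eq_pow_val, this, Units.val_one]
  have hω1 : ω ≠ 1 := by
    intro h
    have : u = 1 := Units.ext h
    rw [this, orderOf_one] at hu
    omega
  have hsum : ω ^ 2 + ω + 1 = 0 := by
    have hfac : (ω - 1) * (ω ^ 2 + ω + 1) = 0 := by linear_combination hω3
    rcases mul_eq_zero.mp hfac with h | h
    · exact absurd (sub_eq_zero.mp h) hω1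
    · exact h
  have hy : (2 * ω + 1) ^ 2 = -3 := by linear_combination 4 * hsum
  set y : ZMod p := 2 * ω + 1 with hydef
  have hy0 : y ≠ 0 := by
    intro h
    rw [h] at hy
    exact h30 (by linear_combination hy)
  set m := (p - 1) / 6 with hmdef
  have hm6 : p - 1 = 6 * m := by omega
  have hcube : ((-3 : ZMod p) ^ m) ^ 3 = 1 := by
    rw [← hy, ← pow_mul, ← pow_mul, show 2 * (m * 3) = p - 1 by omega]
    exact ZMod.pow_card_sub_one_eq_one hy0
  refine ⟨⟨y, hy⟩, hcube, ?_⟩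
  have hsq_iff : ((-3 : ZMod p) ^ m) ^ 2 = 1 ↔ ∃ x : ZMod p, x ^ 3 = 3 := by
    rw [← pow_mul, show m * 2 = (p - 1) / 3 by omega]
    rw [cube_crit' p h3 (-3) hn30]
    constructor
    · rintro ⟨x, hx⟩; exact ⟨-x, by linear_combination -hx⟩
    · rintro ⟨x, hx⟩; exact ⟨-x, by linear_combination -hx⟩
  constructor
  · intro h
    exact hsq_iff.mp (by rw [h]; ring)
  · intro h
    have hsq := hsq_iff.mpr h
    linear_combination hcube - ((-3 : ZMod p) ^ m) * hsq
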